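/- Fix integers m, k ≥ 2 with m ≠ k, and let Ω₀⁰ be the spherical tetrahedron with vertices t_{−1/2}, t_{1/2}, t^{−1/2}, t^{1/2}. Then the stabilizer of Ω₀⁰ in O(4) is exactly the group {id, R_{Σ₀}, R_{Σ⁰}, R_{C₀⁰}} ≅ ℤ₂ × ℤ₂, where R_{Σ₀} is the reflection (x₁,x₂,x₃,x₄) ↦ (x₁,−x₂,x₃,x₄), R_{Σ⁰} is (x₁,x₂,x₃,x₄) ↦ (x₁,x₂,x₃,−x₄), and R_{C₀⁰} is (x₁,x₂,x₃,x₄) ↦ (x₁,−x₂,x₃,−x₄). -/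

import Mathlib

open Real

noncomputable section

abbrev E4 := EuclideanSpace ℝ (Fin 4)

def pt (a b c d : ℝ) : E4 := WithLp.toLp 2 ![a, b, c, d]

def tLow (m : ℕ) (i : ℝ) : E4 := pt (cos (i * π / m)) (sin (i * π / m)) 0 0

def tUp (k : ℕ) (j : ℝ) : E4 := pt 0 0 (cos (j * π / k)) (sin (j * π / k))

def vert (m k : ℕ) : Fin 4 → E4 :=
  ![tLow m (-(1/2)), tLow m (1/2), tUp k (-(1/2)), tUp k (1/2)]

/-- The spherical tetrahedron `Ω₀⁰`. -/
def Tet (m k : ℕ) : Set E4 :=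
  {u | ‖u‖ = 1 ∧ ∃ c : Fin 4 → ℝ, (∀ i, 0 ≤ c i) ∧
    ∃ r : ℝ, 0 < r ∧ r • u = ∑ i, c i • vert m k i}

/-- The reflection `R_{Σ₀} : (x₁,x₂,x₃,x₄) ↦ (x₁,−x₂,x₃,x₄)`. -/
def rSigLow (x : E4) : E4 := pt (x 0) (-(x 1)) (x 2) (x 3)

/-- The reflection `R_{Σ⁰} : (x₁,x₂,x₃,x₄) ↦ (x₁,x₂,x₃,−x₄)`. -/
def rSigUp (x : E4) : E4 := pt (x 0) (x 1) (x 2) (-(x 3))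

/-- The reflection `R_{C₀⁰} : (x₁,x₂,x₃,x₄) ↦ (x₁,−x₂,x₃,−x₄)`. -/
def rC (x : E4) : E4 := pt (x 0) (-(x 1)) (x 2) (-(x 3))

open RealInnerProductSpace

def gram (m k : ℕ) : Fin 4 → Fin 4 → ℝ :=
  ![![1, cos (π/m), 0, 0], ![cos (π/m), 1, 0, 0],
    ![0, 0, 1, cos (π/k)], ![0, 0, cos (π/k), 1]]

lemma inner_vert (m k : ℕ) (p q : Fin 4) : ⟪vert m k p, vert m k q⟫ = gram m k p q := by
  fin_cases p <;> fin_cases q <;>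
    simp [vert, tLow, tUp, pt, gram, PiLp.inner_apply, Fin.sum_univ_four,
      Matrix.vecHead, Matrix.vecTail] <;>
    first
    | rfl
    | (rw [← Real.cos_sub]; ring_nf; try simp [Real.cos_neg])
    | (left; simp [EuclideanSpace.norm_eq, Fin.sum_univ_four])

lemma norm_vert (m k : ℕ) (p : Fin 4) : ‖vert m k p‖ = 1 := by
  have h := inner_vert m k p p
  have h2 : ⟪vert m k p, vert m k p⟫ = ‖vert m k p‖ * ‖vert m k p‖ :=
    real_inner_self_eq_norm_mul_norm _
  have : gram m k p p = 1 := by fin_cases p <;> simp [gram]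
  nlinarith [norm_nonneg (vert m k p)]

-- bounds on A, B
lemma cos_pi_div_nonneg (m : ℕ) (hm : 2 ≤ m) : 0 ≤ cos (π / m) := by
  apply Real.cos_nonneg_of_mem_Icc
  constructor
  · have : (0:ℝ) ≤ π / m := by positivity
    linarith [Real.pi_pos]
  · rw [div_le_div_iff₀ (by positivity) (by norm_num : (0:ℝ) < 2)]
    have : (2:ℝ) ≤ m := by exact_mod_cast hm
    nlinarith [Real.pi_pos]

lemma pi_div_mem (m : ℕ) (hm : 2 ≤ m) : π / m ∈ Set.Icc 0 π := by
  have hm0 : (0:ℝ) < m := by positivity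
  constructor
  · positivity
  · rw [div_le_iff₀ hm0]
    nlinarith [Real.pi_pos, mul_le_mul_of_nonneg_left (by exact_mod_cast hm : (2:ℝ) ≤ m) Real.pi_pos.le]


lemma cos_pi_div_lt_one (m : ℕ) (hm : 2 ≤ m) : cos (π / m) < 1 := by
  rcases lt_or_eq_of_le (Real.cos_le_one (π / m)) with h | h
  · exact h
  · exfalso
    have h0 : (0:ℝ) ∈ Set.Icc 0 π := ⟨le_refl _, Real.pi_pos.le⟩
    have := Real.injOn_cos (pi_div_mem m hm) h0 (by rw [h, Real.cos_zero])
    have hm0 : (0:ℝ) < m := by positivity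
    have hπ : π / m > 0 := by positivity
    linarith

lemma cos_eq_zero_imp (m : ℕ) (hm : 2 ≤ m) (h : cos (π / m) = 0) : m = 2 := by
  have h2 : π / 2 ∈ Set.Icc 0 π := ⟨by positivity, by linarith [Real.pi_pos]⟩
  have := Real.injOn_cos (pi_div_mem m hm) h2 (by rw [h, Real.cos_pi_div_two])
  have hm0 : (0:ℝ) < m := by positivity
  have h2' : (m:ℝ) = 2 := by
    rw [div_eq_div_iff hm0.ne' (by norm_num)] at this
    have := mul_left_cancel₀ Real.pi_ne_zero (by linarith : π * 2 = π * m)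
    linarith
  exact_mod_cast h2'

lemma cos_ne (m k : ℕ) (hm : 2 ≤ m) (hk : 2 ≤ k) (hmk : m ≠ k) :
    cos (π / m) ≠ cos (π / k) := by
  intro h
  have := Real.injOn_cos (pi_div_mem m hm) (pi_div_mem k hk) h
  have hm0 : (0:ℝ) < m := by positivity
  have hk0 : (0:ℝ) < k := by positivity
  have hπ := Real.pi_pos
  have h2' : (m:ℝ) = k := by
    rw [div_eq_div_iff hm0.ne' hk0.ne'] at this
    have := mul_left_cancel₀ Real.pi_ne_zero (by linarith : π * k = π * m)
    linarith
  exact hmk (by exact_mod_cast h2')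

lemma coeff_unique (m k : ℕ) (hm : 2 ≤ m) (hk : 2 ≤ k) {c d : Fin 4 → ℝ}
    (h : ∑ i, c i • vert m k i = ∑ i, d i • vert m k i) : c = d := by
  set A := cos (π/m) with hA
  set B := cos (π/k) with hB
  have hA0 : 0 ≤ A := cos_pi_div_nonneg m hm
  have hA1 : A < 1 := cos_pi_div_lt_one m hm
  have hB0 : 0 ≤ B := cos_pi_div_nonneg k hk
  have hB1 : B < 1 := cos_pi_div_lt_one k hk
  set e : Fin 4 → ℝ := fun i => c i - d i with he
  have hsum : ∑ i, e i • vert m k i = 0 := by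
    simp only [he, sub_smul, Finset.sum_sub_distrib, h, sub_self]
  have key : ∀ j, ∑ i, e i * gram m k i j = 0 := by
    intro j
    calc ∑ i, e i * gram m k i j = ⟪∑ i, e i • vert m k i, vert m k j⟫ := by
          rw [sum_inner]
          exact (Finset.sum_congr rfl fun i _ => by
            rw [real_inner_smul_left, inner_vert]).symm
      _ = 0 := by rw [hsum, inner_zero_left]
  have k0 := key 0; have k1 := key 1; have k2 := key 2; have k3 := key 3
  simp only [Fin.sum_univ_four, gram, hA, hB] at k0 k1 k2 k3
  simp only [Matrix.cons_val_zero, Matrix.cons_val_one, Matrix.head_cons,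
    Matrix.cons_val_two, Matrix.tail_cons, Matrix.cons_val_three,
    Matrix.head_fin_const, mul_one, mul_zero, add_zero, zero_add] at k0 k1 k2 k3
  have h1 : e 1 * (1 - A^2) = 0 := by linear_combination k1 - A * k0
  have h3 : e 3 * (1 - B^2) = 0 := by linear_combination k3 - B * k2
  have hA2 : (0:ℝ) < 1 - A^2 := by nlinarith
  have hB2 : (0:ℝ) < 1 - B^2 := by nlinarith
  have e1 : e 1 = 0 := by
    rcases mul_eq_zero.1 h1 with h' | h'
    · exact h'
    · linarith
  have e3 : e 3 = 0 := by
    rcases mul_eq_zero.1 h3 with h' | h'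
    · exact h'
    · linarith
  have e0 : e 0 = 0 := by rw [e1] at k0; simpa using k0
  have e2 : e 2 = 0 := by rw [e3] at k2; simpa using k2
  funext i
  have : e i = 0 := by fin_cases i <;> assumption
  simpa [he, sub_eq_zero] using this

lemma li_vert (m k : ℕ) (hm : 2 ≤ m) (hk : 2 ≤ k) : LinearIndependent ℝ (vert m k) := by
  rw [Fintype.linearIndependent_iff]
  intro c hc i
  have := coeff_unique m k hm hk (d := fun _ => 0) (by simpa using hc)
  exact congrFun this i

def InCone (m k : ℕ) (x : E4) : Prop :=
  ∃ c : Fin 4 → ℝ, (∀ i, 0 ≤ c i) ∧ x = ∑ i, c i • vert m k i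

lemma inCone_smul (m k : ℕ) {x : E4} {r : ℝ} (hr : 0 ≤ r) (h : InCone m k x) :
    InCone m k (r • x) := by
  obtain ⟨c, hc, rfl⟩ := h
  exact ⟨fun i => r * c i, fun i => mul_nonneg hr (hc i),
    by rw [Finset.smul_sum]; exact Finset.sum_congr rfl fun i _ => (smul_smul r (c i) _)⟩

lemma mem_tet_iff (m k : ℕ) (u : E4) : u ∈ Tet m k ↔ ‖u‖ = 1 ∧ InCone m k u := by
  constructor
  · rintro ⟨h1, c, hc, r, hr, hru⟩
    refine ⟨h1, fun i => r⁻¹ * c i, fun i => mul_nonneg (inv_nonneg.2 hr.le) (hc i), ?_⟩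
    have := congrArg (fun x => r⁻¹ • x) hru
    simp only [smul_smul, inv_mul_cancel₀ hr.ne', one_smul] at this
    rw [this, Finset.smul_sum]
    exact Finset.sum_congr rfl fun i _ => (smul_smul r⁻¹ (c i) _)
  · rintro ⟨h1, c, hc, hu⟩
    exact ⟨h1, c, hc, 1, one_pos, by simpa using hu⟩

lemma inCone_vert (m k : ℕ) (j : Fin 4) : InCone m k (vert m k j) := by
  refine ⟨fun i => if i = j then 1 else 0, fun i => by positivity, ?_⟩
  simp [ite_smul]

lemma cone_preserved (m k : ℕ) (g : E4 ≃ₗᵢ[ℝ] E4) (hg : g '' Tet m k = Tet m k)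
    {x : E4} (hx : InCone m k x) : InCone m k (g x) := by
  rcases eq_or_ne x 0 with rfl | hx0
  · simpa using ⟨fun _ => (0:ℝ), fun i => le_refl 0, by simp⟩
  · have hn : (0:ℝ) < ‖x‖ := norm_pos_iff.2 hx0
    set u : E4 := ‖x‖⁻¹ • x with hu
    have hu1 : ‖u‖ = 1 := by
      rw [hu, norm_smul]; simp [abs_of_nonneg hn.le, inv_mul_cancel₀ hn.ne']
    have hut : u ∈ Tet m k :=
      (mem_tet_iff m k u).2 ⟨hu1, inCone_smul m k (by positivity) hx⟩
    have hgu : g u ∈ Tet m k := hg ▸ Set.mem_image_of_mem _ hut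
    have hgu' : InCone m k (g u) := ((mem_tet_iff m k _).1 hgu).2
    have : g x = ‖x‖ • g u := by
      rw [hu, map_smul, smul_smul, mul_inv_cancel₀ hn.ne', one_smul]
    rw [this]
    exact inCone_smul m k hn.le hgu'

lemma symm_image (m k : ℕ) (g : E4 ≃ₗᵢ[ℝ] E4) (hg : g '' Tet m k = Tet m k) :
    g.symm '' Tet m k = Tet m k := by
  conv_lhs => rw [← hg]
  ext x
  simp [Set.image_image]

lemma img_eq (m k : ℕ) (g : E4 ≃ₗᵢ[ℝ] E4) (τ : Equiv.Perm (Fin 4))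
    (h : ∀ i, g (vert m k i) = vert m k (τ i)) : g '' Tet m k = Tet m k := by
  have sub : ∀ (g' : E4 ≃ₗᵢ[ℝ] E4) (τ' : Equiv.Perm (Fin 4)),
      (∀ i, g' (vert m k i) = vert m k (τ' i)) → g' '' Tet m k ⊆ Tet m k := by
    rintro g' τ' h' _ ⟨u, ⟨hu1, c, hc, r, hr, hru⟩, rfl⟩
    refine ⟨by rw [g'.norm_map, hu1], fun i => c (τ'.symm i),
      fun i => hc _, r, hr, ?_⟩
    have : g' (r • u) = g' (∑ i, c i • vert m k i) := congrArg g' hru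
    rw [map_smul] at this
    rw [this, map_sum]
    simp_rw [map_smul, h']
    exact (Equiv.sum_comp τ' (fun i => c (τ'.symm i) • vert m k i)).symm ▸
      (Finset.sum_congr rfl fun i _ => by rw [Equiv.symm_apply_apply])
  have h2 : ∀ i, g.symm (vert m k i) = vert m k (τ.symm i) := by
    intro i
    have := h (τ.symm i)
    rw [Equiv.apply_symm_apply] at this
    rw [← this, g.symm_apply_apply]
  refine Set.Subset.antisymm (sub g τ h) ?_
  intro x hx
  exact ⟨g.symm x, sub g.symm τ.symm h2 ⟨x, hx, rfl⟩, by simp⟩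

lemma vertex_image (m k : ℕ) (hm : 2 ≤ m) (hk : 2 ≤ k) (g : E4 ≃ₗᵢ[ℝ] E4)
    (hg : g '' Tet m k = Tet m k) (j : Fin 4) :
    ∃ p, g (vert m k j) = vert m k p := by
  obtain ⟨a, ha, hw⟩ := cone_preserved m k g hg (inCone_vert m k j)
  set w := g (vert m k j) with hwdef
  have hg' := symm_image m k g hg
  -- at most one coordinate of a is nonzero
  have atmost : ∀ p q, p ≠ q → a p ≠ 0 → a q ≠ 0 → False := by
    intro p q hpq hap haq
    have hap' : 0 < a p := lt_of_le_of_ne (ha p) (Ne.symm hap)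
    have haq' : 0 < a q := lt_of_le_of_ne (ha q) (Ne.symm haq)
    set y : E4 := a p • vert m k p with hy
    set z : E4 := ∑ i, (if i = p then 0 else a i) • vert m k i with hz
    have hyz : y + z = w := by
      rw [hy, hz, hw]
      have : a p • vert m k p = ∑ i, (if i = p then a p else 0) • vert m k i := by
        simp [ite_smul]
      rw [this, ← Finset.sum_add_distrib]
      refine Finset.sum_congr rfl fun i _ => ?_
      by_cases hip : i = p
      · subst hip; simp
      · simp [hip]
    have hyc : InCone m k y := inCone_smul m k hap'.le (inCone_vert m k p)
    have hzc : InCone m k z :=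
      ⟨fun i => if i = p then 0 else a i,
       fun i => by by_cases hip : i = p <;> simp [hip, ha i], rfl⟩
    obtain ⟨b, hb, hby⟩ := cone_preserved m k g.symm hg' hyc
    obtain ⟨b', hb', hbz⟩ := cone_preserved m k g.symm hg' hzc
    have hsum : ∑ i, (b i + b' i) • vert m k i
        = ∑ i, (if i = j then (1:ℝ) else 0) • vert m k i := by
      have h1 : g.symm y + g.symm z = vert m k j := by
        rw [← map_add, hyz, hwdef, g.symm_apply_apply]
      calc ∑ i, (b i + b' i) • vert m k i
          = (∑ i, b i • vert m k i) + ∑ i, b' i • vert m k i := by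
            rw [← Finset.sum_add_distrib]
            exact Finset.sum_congr rfl fun i _ => add_smul _ _ _
        _ = g.symm y + g.symm z := by rw [← hby, ← hbz]
        _ = vert m k j := h1
        _ = ∑ i, (if i = j then (1:ℝ) else 0) • vert m k i := by simp [ite_smul]
    have hbb := coeff_unique m k hm hk hsum
    have hbzero : ∀ i, i ≠ j → b i = 0 := by
      intro i hij
      have := congrFun hbb i
      simp [hij] at this
      linarith [hb i, hb' i, this]
    have hby' : g.symm y = b j • vert m k j := by
      rw [hby]
      rw [Finset.sum_eq_single j]
      · intro i _ hij; rw [hbzero i hij, zero_smul]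
      · intro h; exact absurd (Finset.mem_univ j) h
    have hyw : y = b j • w := by
      have := congrArg g hby'
      rw [g.apply_symm_apply, map_smul, ← hwdef] at this
      exact this
    -- coordinates of y
    have hcoord : (fun i => if i = p then a p else 0) = fun i => b j * a i := by
      apply coeff_unique m k hm hk
      calc ∑ i, (if i = p then a p else 0) • vert m k i = y := by simp [hy, ite_smul]
        _ = b j • w := hyw
        _ = ∑ i, (b j * a i) • vert m k i := by
            rw [hw, Finset.smul_sum]
            exact Finset.sum_congr rfl fun i _ => smul_smul _ _ _
    have hq := congrFun hcoord q
    rw [if_neg (Ne.symm hpq)] at hq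
    have hbj : b j = 0 := by
      rcases mul_eq_zero.1 hq.symm with h' | h'
      · exact h'
      · exact absurd h' haq
    have hp2 := congrFun hcoord p
    rw [if_pos rfl, hbj, zero_mul] at hp2
    exact hap hp2
  -- at least one coordinate nonzero
  have hwne : w ≠ 0 := by
    rw [hwdef]
    intro h
    have := g.injective (by simpa using h)
    have hn := norm_vert m k j
    rw [this] at hn
    simp at hn
  obtain ⟨p, hp⟩ : ∃ p, a p ≠ 0 := by
    by_contra hall
    push_neg at hall
    apply hwne
    rw [hw]
    simp [hall]
  have hap' : 0 < a p := lt_of_le_of_ne (ha p) (Ne.symm hp)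
  have hcollapse : w = a p • vert m k p := by
    rw [hw, Finset.sum_eq_single p]
    · intro i _ hip
      have : a i = 0 := by
        by_contra h'
        exact atmost i p hip h' hp
      rw [this, zero_smul]
    · intro h; exact absurd (Finset.mem_univ p) h
  have hnorm : a p = 1 := by
    have h1 : ‖w‖ = 1 := by rw [hwdef, g.norm_map]; exact norm_vert m k j
    rw [hcollapse, norm_smul, norm_vert, mul_one, Real.norm_eq_abs,
      abs_of_pos hap'] at h1
    exact h1
  exact ⟨p, by rw [hcollapse, hnorm, one_smul]⟩

def rSigLowL : E4 →ₗ[ℝ] E4 where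
  toFun := rSigLow
  map_add' x y := by
    ext j; fin_cases j <;>
      simp [rSigLow, pt, PiLp.add_apply] <;> ring
  map_smul' r x := by
    ext j; fin_cases j <;>
      simp [rSigLow, pt, PiLp.smul_apply] <;> ring

def rSigUpL : E4 →ₗ[ℝ] E4 where
  toFun := rSigUp
  map_add' x y := by
    ext j; fin_cases j <;>
      simp [rSigUp, pt, PiLp.add_apply] <;> ring
  map_smul' r x := by
    ext j; fin_cases j <;>
      simp [rSigUp, pt, PiLp.smul_apply] <;> ring

def rCL : E4 →ₗ[ℝ] E4 where
  toFun := rC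
  map_add' x y := by
    ext j; fin_cases j <;>
      simp [rC, pt, PiLp.add_apply] <;> ring
  map_smul' r x := by
    ext j; fin_cases j <;>
      simp [rC, pt, PiLp.smul_apply] <;> ring

-- action of the maps on vertices
lemma rSigLow_tLow (m : ℕ) (i : ℝ) : rSigLow (tLow m i) = tLow m (-i) := by
  ext j; fin_cases j <;>
    simp [rSigLow, tLow, pt, neg_mul, neg_div, Real.cos_neg, Real.sin_neg]

lemma rSigLow_tUp (k : ℕ) (i : ℝ) : rSigLow (tUp k i) = tUp k i := by
  ext j; fin_cases j <;> simp [rSigLow, tUp, pt]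

lemma rSigUp_tLow (m : ℕ) (i : ℝ) : rSigUp (tLow m i) = tLow m i := by
  ext j; fin_cases j <;> simp [rSigUp, tLow, pt]

lemma rSigUp_tUp (k : ℕ) (i : ℝ) : rSigUp (tUp k i) = tUp k (-i) := by
  ext j; fin_cases j <;>
    simp [rSigUp, tUp, pt, neg_mul, neg_div, Real.cos_neg, Real.sin_neg]

lemma rC_tLow (m : ℕ) (i : ℝ) : rC (tLow m i) = tLow m (-i) := by
  ext j; fin_cases j <;>
    simp [rC, tLow, pt, neg_mul, neg_div, Real.cos_neg, Real.sin_neg]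

lemma rC_tUp (k : ℕ) (i : ℝ) : rC (tUp k i) = tUp k (-i) := by
  ext j; fin_cases j <;>
    simp [rC, tUp, pt, neg_mul, neg_div, Real.cos_neg, Real.sin_neg]

def basE4 (m k : ℕ) (hm : 2 ≤ m) (hk : 2 ≤ k) : Module.Basis (Fin 4) ℝ E4 :=
  basisOfLinearIndependentOfCardEqFinrank (li_vert m k hm hk) (by simp)

lemma eq_of_agree_on_vert (m k : ℕ) (hm : 2 ≤ m) (hk : 2 ≤ k)
    (g : E4 ≃ₗᵢ[ℝ] E4) (f : E4 →ₗ[ℝ] E4)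
    (h : ∀ i, g (vert m k i) = f (vert m k i)) : ⇑g = ⇑f := by
  have : (g.toLinearEquiv.toLinearMap : E4 →ₗ[ℝ] E4) = f := by
    apply Module.Basis.ext (basE4 m k hm hk)
    intro i
    rw [show (basE4 m k hm hk) i = vert m k i from
      congrFun (coe_basisOfLinearIndependentOfCardEqFinrank _ _) i]
    exact h i
  funext x
  exact congrFun (congrArg (fun (f : E4 →ₗ[ℝ] E4) => ⇑f) this) x

lemma vert0 (m k : ℕ) : vert m k 0 = tLow m (-(1/2)) := rfl
lemma vert1 (m k : ℕ) : vert m k 1 = tLow m (1/2) := rfl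
lemma vert2 (m k : ℕ) : vert m k 2 = tUp k (-(1/2)) := rfl
lemma vert3 (m k : ℕ) : vert m k 3 = tUp k (1/2) := rfl

lemma rSigLow_vert (m k : ℕ) (i : Fin 4) :
    rSigLow (vert m k i) = vert m k (Equiv.swap 0 1 i) := by
  fin_cases i
  · show rSigLow (vert m k 0) = vert m k (Equiv.swap 0 1 0)
    rw [show (Equiv.swap (0:Fin 4) 1) 0 = 1 from by decide,
      vert0, vert1, rSigLow_tLow, neg_neg]
  · show rSigLow (vert m k 1) = vert m k (Equiv.swap 0 1 1)
    rw [show (Equiv.swap (0:Fin 4) 1) 1 = 0 from by decide,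
      vert0, vert1, rSigLow_tLow]
  · show rSigLow (vert m k 2) = vert m k (Equiv.swap 0 1 2)
    rw [show (Equiv.swap (0:Fin 4) 1) 2 = 2 from by decide, vert2, rSigLow_tUp]
  · show rSigLow (vert m k 3) = vert m k (Equiv.swap 0 1 3)
    rw [show (Equiv.swap (0:Fin 4) 1) 3 = 3 from by decide, vert3, rSigLow_tUp]

lemma rSigUp_vert (m k : ℕ) (i : Fin 4) :
    rSigUp (vert m k i) = vert m k (Equiv.swap 2 3 i) := by
  fin_cases i
  · show rSigUp (vert m k 0) = vert m k (Equiv.swap 2 3 0)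
    rw [show (Equiv.swap (2:Fin 4) 3) 0 = 0 from by decide, vert0, rSigUp_tLow]
  · show rSigUp (vert m k 1) = vert m k (Equiv.swap 2 3 1)
    rw [show (Equiv.swap (2:Fin 4) 3) 1 = 1 from by decide, vert1, rSigUp_tLow]
  · show rSigUp (vert m k 2) = vert m k (Equiv.swap 2 3 2)
    rw [show (Equiv.swap (2:Fin 4) 3) 2 = 3 from by decide,
      vert2, vert3, rSigUp_tUp, neg_neg]
  · show rSigUp (vert m k 3) = vert m k (Equiv.swap 2 3 3)
    rw [show (Equiv.swap (2:Fin 4) 3) 3 = 2 from by decide, vert2, vert3, rSigUp_tUp]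

lemma rC_vert (m k : ℕ) (i : Fin 4) :
    rC (vert m k i) = vert m k ((Equiv.swap 0 1 * Equiv.swap 2 3 : Equiv.Perm (Fin 4)) i) := by
  fin_cases i
  · show rC (vert m k 0) = vert m k ((Equiv.swap 0 1 * Equiv.swap 2 3 : Equiv.Perm (Fin 4)) 0)
    rw [show ((Equiv.swap 0 1 * Equiv.swap 2 3) : Equiv.Perm (Fin 4)) 0 = 1 from by decide,
      vert0, vert1, rC_tLow, neg_neg]
  · show rC (vert m k 1) = vert m k ((Equiv.swap 0 1 * Equiv.swap 2 3 : Equiv.Perm (Fin 4)) 1)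
    rw [show ((Equiv.swap 0 1 * Equiv.swap 2 3) : Equiv.Perm (Fin 4)) 1 = 0 from by decide,
      vert0, vert1, rC_tLow]
  · show rC (vert m k 2) = vert m k ((Equiv.swap 0 1 * Equiv.swap 2 3 : Equiv.Perm (Fin 4)) 2)
    rw [show ((Equiv.swap 0 1 * Equiv.swap 2 3) : Equiv.Perm (Fin 4)) 2 = 3 from by decide,
      vert2, vert3, rC_tUp, neg_neg]
  · show rC (vert m k 3) = vert m k ((Equiv.swap 0 1 * Equiv.swap 2 3 : Equiv.Perm (Fin 4)) 3)
    rw [show ((Equiv.swap 0 1 * Equiv.swap 2 3) : Equiv.Perm (Fin 4)) 3 = 2 from by decide,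
      vert2, vert3, rC_tUp]

/-- For `m ≠ k` the stabilizer of `Ω₀⁰` in `O(4)` (the group of linear isometries of `ℝ⁴`)
is exactly `{id, R_{Σ₀}, R_{Σ⁰}, R_{C₀⁰}} ≅ ℤ₂ × ℤ₂`. -/
theorem statement10 (m k : ℕ) (hm : 2 ≤ m) (hk : 2 ≤ k) (hmk : m ≠ k)
    (g : E4 ≃ₗᵢ[ℝ] E4) :
    g '' Tet m k = Tet m k ↔
      (⇑g = id ∨ ⇑g = rSigLow ∨ ⇑g = rSigUp ∨ ⇑g = rC) := by
  constructor
  · intro hg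
    choose σ hσ using vertex_image m k hm hk g hg
    have vinj : Function.Injective (vert m k) := (li_vert m k hm hk).injective
    have hinj : Function.Injective σ := by
      intro p q h
      exact vinj (g.injective (by rw [hσ p, hσ q, h]))
    have key : ∀ p q, gram m k (σ p) (σ q) = gram m k p q := by
      intro p q
      rw [← inner_vert, ← inner_vert, ← hσ p, ← hσ q]
      exact g.inner_map_map _ _
    have hi23 : ∀ r : Fin 4, ¬(r = 0 ∨ r = 1) → r = 2 ∨ r = 3 := by decide
    have f2 : ∀ p q : Fin 4, p ≠ q → ¬(p = 0 ∨ p = 1) → ¬(q = 0 ∨ q = 1) →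
        gram m k p q = cos (π / k) := by
      intro p q hpq hp hq
      rcases hi23 p hp with rfl | rfl <;> rcases hi23 q hq with rfl | rfl <;>
        first
        | exact absurd rfl hpq
        | simp [gram, Matrix.vecHead, Matrix.vecTail]
    have f3 : ∀ p q : Fin 4, (p = 0 ∨ p = 1) → ¬(q = 0 ∨ q = 1) →
        gram m k p q = 0 := by
      intro p q hp hq
      rcases hp with rfl | rfl <;> rcases hi23 q hq with rfl | rfl <;>
        simp [gram, Matrix.vecHead, Matrix.vecTail]
    have f3' : ∀ p q : Fin 4, ¬(p = 0 ∨ p = 1) → (q = 0 ∨ q = 1) →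
        gram m k p q = 0 := by
      intro p q hp hq
      rcases hi23 p hp with rfl | rfl <;> rcases hq with rfl | rfl <;>
        simp [gram, Matrix.vecHead, Matrix.vecTail]
    have h01 : gram m k (σ 0) (σ 1) = cos (π / m) := by
      rw [key 0 1]; simp [gram]
    have h23 : gram m k (σ 2) (σ 3) = cos (π / k) := by
      rw [key 2 3]; simp [gram, Matrix.vecHead, Matrix.vecTail]
    have hσ01 : σ 0 ≠ σ 1 := fun h => absurd (hinj h) (by decide)
    have hσ23 : σ 2 ≠ σ 3 := fun h => absurd (hinj h) (by decide)
    have hAB := cos_ne m k hm hk hmk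
    have notmixed : ¬(((σ 0 = 0 ∨ σ 0 = 1) ∧ ¬(σ 1 = 0 ∨ σ 1 = 1)) ∨
        (¬(σ 0 = 0 ∨ σ 0 = 1) ∧ (σ 1 = 0 ∨ σ 1 = 1))) := by
      intro hmix
      have hA : cos (π / m) = 0 := by
        rcases hmix with ⟨h1, h2⟩ | ⟨h1, h2⟩
        · rw [← h01]; exact f3 _ _ h1 h2
        · rw [← h01]; exact f3' _ _ h1 h2
      have pig : ∀ a b c d : Fin 4, a ≠ b → a ≠ c → a ≠ d → b ≠ c → b ≠ d → c ≠ d →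
          (((a = 0 ∨ a = 1) ∧ ¬(b = 0 ∨ b = 1)) ∨ (¬(a = 0 ∨ a = 1) ∧ (b = 0 ∨ b = 1))) →
          (((c = 0 ∨ c = 1) ∧ ¬(d = 0 ∨ d = 1)) ∨ (¬(c = 0 ∨ c = 1) ∧ (d = 0 ∨ d = 1))) := by
        decide
      have hmix23 := pig (σ 0) (σ 1) (σ 2) (σ 3)
        hσ01 (fun h => absurd (hinj h) (by decide)) (fun h => absurd (hinj h) (by decide))
        (fun h => absurd (hinj h) (by decide)) (fun h => absurd (hinj h) (by decide))
        hσ23 hmix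
      have hB : cos (π / k) = 0 := by
        rcases hmix23 with ⟨h1, h2⟩ | ⟨h1, h2⟩
        · rw [← h23]; exact f3 _ _ h1 h2
        · rw [← h23]; exact f3' _ _ h1 h2
      have := cos_eq_zero_imp m hm hA
      have := cos_eq_zero_imp k hk hB
      omega
    by_cases c0 : σ 0 = 0 ∨ σ 0 = 1
    case neg =>
      by_cases c1 : σ 1 = 0 ∨ σ 1 = 1
      · exact absurd (Or.inr ⟨c0, c1⟩) notmixed
      · exact absurd (h01 ▸ (f2 _ _ hσ01 c0 c1).symm) hAB.symm
    case pos =>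
    have c1 : σ 1 = 0 ∨ σ 1 = 1 := by
      by_contra c1
      exact notmixed (Or.inl ⟨c0, c1⟩)
    have c2 : ¬(σ 2 = 0 ∨ σ 2 = 1) := by
      rintro (h | h) <;> rcases c0 with h0 | h0 <;> rcases c1 with h1 | h1 <;>
        first
        | (exact absurd (hinj (h.trans h0.symm)) (by decide))
        | (exact absurd (hinj (h.trans h1.symm)) (by decide))
        | (exact absurd (hinj (h0.trans h1.symm)) (by decide))
    have c3 : ¬(σ 3 = 0 ∨ σ 3 = 1) := by
      rintro (h | h) <;> rcases c0 with h0 | h0 <;> rcases c1 with h1 | h1 <;>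
        first
        | (exact absurd (hinj (h.trans h0.symm)) (by decide))
        | (exact absurd (hinj (h.trans h1.symm)) (by decide))
        | (exact absurd (hinj (h0.trans h1.symm)) (by decide))
    have c2' := hi23 _ c2
    have c3' := hi23 _ c3
    rcases c0 with h0 | h0 <;> rcases c1 with h1 | h1 <;>
      first
      | (exact absurd (hinj (h0.trans h1.symm)) (by decide))
      | skip
    all_goals rcases c2' with h2 | h2 <;> rcases c3' with h3 | h3 <;>
      first
      | (exact absurd (hinj (h2.trans h3.symm)) (by decide))
      | skip
    -- σ = id
    · left
      have := eq_of_agree_on_vert m k hm hk g LinearMap.id (fun i => by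
        fin_cases i
        · show g (vert m k 0) = _; rw [hσ 0, h0]; rfl
        · show g (vert m k 1) = _; rw [hσ 1, h1]; rfl
        · show g (vert m k 2) = _; rw [hσ 2, h2]; rfl
        · show g (vert m k 3) = _; rw [hσ 3, h3]; rfl)
      rw [this]; rfl
    -- σ swaps 2,3 : rSigUp
    · right; right; left
      have := eq_of_agree_on_vert m k hm hk g rSigUpL (fun i => by
        fin_cases i
        · show g (vert m k 0) = rSigUpL (vert m k 0)
          rw [hσ 0, h0]
          show vert m k 0 = rSigUp (vert m k 0)
          rw [vert0, rSigUp_tLow]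
        · show g (vert m k 1) = rSigUpL (vert m k 1)
          rw [hσ 1, h1]
          show vert m k 1 = rSigUp (vert m k 1)
          rw [vert1, rSigUp_tLow]
        · show g (vert m k 2) = rSigUpL (vert m k 2)
          rw [hσ 2, h2]
          show vert m k 3 = rSigUp (vert m k 2)
          rw [vert2, vert3, rSigUp_tUp, neg_neg]
        · show g (vert m k 3) = rSigUpL (vert m k 3)
          rw [hσ 3, h3]
          show vert m k 2 = rSigUp (vert m k 3)
          rw [vert2, vert3, rSigUp_tUp])
      rw [this]; rfl
    -- σ swaps 0,1 : rSigLow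
    · right; left
      have := eq_of_agree_on_vert m k hm hk g rSigLowL (fun i => by
        fin_cases i
        · show g (vert m k 0) = rSigLowL (vert m k 0)
          rw [hσ 0, h0]
          show vert m k 1 = rSigLow (vert m k 0)
          rw [vert0, vert1, rSigLow_tLow, neg_neg]
        · show g (vert m k 1) = rSigLowL (vert m k 1)
          rw [hσ 1, h1]
          show vert m k 0 = rSigLow (vert m k 1)
          rw [vert0, vert1, rSigLow_tLow]
        · show g (vert m k 2) = rSigLowL (vert m k 2)
          rw [hσ 2, h2]
          show vert m k 2 = rSigLow (vert m k 2)
          rw [vert2, rSigLow_tUp]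
        · show g (vert m k 3) = rSigLowL (vert m k 3)
          rw [hσ 3, h3]
          show vert m k 3 = rSigLow (vert m k 3)
          rw [vert3, rSigLow_tUp])
      rw [this]; rfl
    -- σ swaps both : rC
    · right; right; right
      have := eq_of_agree_on_vert m k hm hk g rCL (fun i => by
        fin_cases i
        · show g (vert m k 0) = rCL (vert m k 0)
          rw [hσ 0, h0]
          show vert m k 1 = rC (vert m k 0)
          rw [vert0, vert1, rC_tLow, neg_neg]
        · show g (vert m k 1) = rCL (vert m k 1)
          rw [hσ 1, h1]
          show vert m k 0 = rC (vert m k 1)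
          rw [vert0, vert1, rC_tLow]
        · show g (vert m k 2) = rCL (vert m k 2)
          rw [hσ 2, h2]
          show vert m k 3 = rC (vert m k 2)
          rw [vert2, vert3, rC_tUp, neg_neg]
        · show g (vert m k 3) = rCL (vert m k 3)
          rw [hσ 3, h3]
          show vert m k 2 = rC (vert m k 3)
          rw [vert2, vert3, rC_tUp])
      rw [this]; rfl
  · rintro (h | h | h | h)
    · exact img_eq m k g 1 (fun i => by rw [congrFun h (vert m k i)]; rfl)
    · exact img_eq m k g (Equiv.swap 0 1) (fun i => by
        rw [congrFun h (vert m k i)]; exact rSigLow_vert m k i)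
    · exact img_eq m k g (Equiv.swap 2 3) (fun i => by
        rw [congrFun h (vert m k i)]; exact rSigUp_vert m k i)
    · exact img_eq m k g (Equiv.swap 0 1 * Equiv.swap 2 3) (fun i => by
        rw [congrFun h (vert m k i)]; exact rC_vert m k i)


end
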